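/- Let g and d be integers with g ≥ 3 and 3 ≤ d ≤ ⌊(g+3)/2⌋, and let X be a K3 surface with Pic(X) = Z[C] ⊕ Z[F], where C is a smooth curve of genus g and F is an elliptic curve with C.F = d, so that C^2 = 2g - 2 and F^2 = 0. Then Pic(X) contains a class of self-intersection -2 if and only if d divides g. -/

import Mathlib

/-!
Abstract divisor theory of a complex algebraic K3 surface, i.e. of a smooth
projective regular surface with trivial canonical bundle.  `Div` is the group
of divisors on the surface, `LinEq` is linear equivalence, `Eff D` means that
`D` is an effective divisor (`D ≥ 0`), `inter` is the intersection pairing,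
and `hᵢ D = dim Hⁱ(X, O_X(D))`.  The axioms record standard facts valid on a
K3 surface: Riemann–Roch `χ(O_X(D)) = D²/2 + 2`, Serre duality for the trivial
canonical bundle, evenness of the intersection form, positivity of very ample
divisors on nonzero effective divisors, etc.
-/
structure K3Surface where
  /-- the group of divisors on the surface -/
  Div : Type
  [grp : AddCommGroup Div]
  /-- linear equivalence of divisors -/
  LinEq : Div → Div → Prop
  /-- `D` is an effective divisor (`D ≥ 0`) -/
  Eff : Div → Prop
  /-- the intersection number `D.E` -/
  inter : Div → Div → ℤ
  /-- `h0 D = dim H⁰(X, O_X(D))` -/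
  h0 : Div → ℕ
  /-- `h1 D = dim H¹(X, O_X(D))` -/
  h1 : Div → ℕ
  /-- `h2 D = dim H²(X, O_X(D))` -/
  h2 : Div → ℕ
  /-- the line bundle `O_X(D)` is very ample -/
  VeryAmple : Div → Prop
  /-- the complete linear system `|D|` is base point free -/
  BasePointFree : Div → Prop
  /-- `D` is a smooth irreducible curve on the surface -/
  SmoothIrredCurve : Div → Prop
  /-- `D` is an irreducible curve on the surface -/
  IrredCurve : Div → Prop
  linEq_refl : ∀ D, LinEq D D
  linEq_symm : ∀ {D E}, LinEq D E → LinEq E D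
  linEq_trans : ∀ {D E G}, LinEq D E → LinEq E G → LinEq D G
  linEq_add : ∀ {D E} (G : Div), LinEq D E → LinEq (D + G) (E + G)
  inter_comm : ∀ D E, inter D E = inter E D
  inter_add_left : ∀ D E G, inter (D + E) G = inter D G + inter E G
  inter_linEq_left : ∀ {D E} (G), LinEq D E → inter D G = inter E G
  inter_self_even : ∀ D, Even (inter D D)
  h0_linEq : ∀ {D E}, LinEq D E → h0 D = h0 E
  h1_linEq : ∀ {D E}, LinEq D E → h1 D = h1 E
  serre_h2 : ∀ D, h2 D = h0 (-D)
  serre_h1 : ∀ D, h1 D = h1 (-D)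
  riemann_roch : ∀ D, 2 * ((h0 D : ℤ) - h1 D + h2 D) = inter D D + 4
  h0_zero : h0 0 = 1
  h1_zero : h1 0 = 0
  eff_zero : Eff 0
  eff_add : ∀ {D E}, Eff D → Eff E → Eff (D + E)
  /-- `|D| ≠ ∅` iff the class of `D` contains an effective divisor -/
  h0_pos_iff : ∀ D, 0 < h0 D ↔ ∃ E, Eff E ∧ LinEq E D
  eff_linEq_zero : ∀ {D}, Eff D → LinEq D 0 → D = 0
  veryAmple_pos : ∀ {L D}, VeryAmple L → Eff D → D ≠ 0 → 0 < inter L D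
  smoothIrredCurve_irred : ∀ {D}, SmoothIrredCurve D → IrredCurve D
  irredCurve_eff : ∀ {D}, IrredCurve D → Eff D ∧ D ≠ 0

attribute [instance] K3Surface.grp

namespace K3Surface

variable (X : K3Surface)

/-- `O_X(D)` is an ACM line bundle with respect to the polarization `O_X(L)`:
`H¹(X, O_X(D) ⊗ O_X(L)^{⊗ l}) = 0` for every integer `l`. -/
def IsACM (L D : X.Div) : Prop := ∀ l : ℤ, X.h1 (D + l • L) = 0

/-- `O_X(D)` is initialized with respect to the polarization `O_X(L)`:
`H⁰(X, O_X(D)) ≠ 0` and `H⁰(X, O_X(D) ⊗ O_X(L)^∨) = 0`. -/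
def IsInitialized (L D : X.Div) : Prop := 0 < X.h0 D ∧ X.h0 (D - L) = 0

/-- `Δ` is the fixed component of the linear system `|D|`: an effective divisor
contained in every member of `|D|`, and the largest such. -/
def IsFixedComponent (D Δ : X.Div) : Prop :=
  X.Eff Δ ∧ (∀ E, X.LinEq E D → X.Eff E → X.Eff (E - Δ)) ∧
    ∀ Δ', X.Eff Δ' → (∀ E, X.LinEq E D → X.Eff E → X.Eff (E - Δ')) → X.Eff (Δ - Δ')

/-- `|D|` is an elliptic pencil: a base point free pencil (`h⁰ = 2`) whose general
member is a smooth irreducible curve of genus one (on a K3 surface a smooth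
irreducible curve `E` has genus `E²/2 + 1`, so genus one means `E² = 0`). -/
def IsEllipticPencil (D : X.Div) : Prop :=
  X.BasePointFree D ∧ X.h0 D = 2 ∧
    ∃ E, X.LinEq E D ∧ X.SmoothIrredCurve E ∧ X.inter E E = 0

/-- `D` is an elliptic curve on the surface: an irreducible curve of arithmetic
genus one, equivalently an irreducible curve with `D² = 0`. -/
def IsEllipticCurve (D : X.Div) : Prop := X.IrredCurve D ∧ X.inter D D = 0

end K3Surface

/-- Let `X` be a K3 surface with `Pic(X) = ℤ[C] ⊕ ℤ[F]`, where `C` is a smooth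
curve of genus `g` (so `C² = 2g - 2`) and `F` is an elliptic curve (so `F² = 0`)
with `C.F = d`, `g ≥ 3`, `3 ≤ d ≤ ⌊(g+3)/2⌋`.  Then `Pic(X)` contains a class of
self-intersection `-2` iff `d ∣ g`. -/
theorem exists_neg_two_class_iff (X : K3Surface) (g d : ℤ)
    (hg : 3 ≤ g) (hd3 : 3 ≤ d) (hd : d ≤ (g + 3) / 2)
    (C F : X.Div)
    (hC : X.SmoothIrredCurve C) (hCC : X.inter C C = 2 * g - 2)
    (hF : X.IsEllipticCurve F) (hCF : X.inter C F = d)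
    (hbasis : ∀ x : X.Div, ∃ a b : ℤ, X.LinEq x (a • C + b • F))
    (hindep : ∀ a b : ℤ, X.LinEq (a • C + b • F) 0 → a = 0 ∧ b = 0) :
    (∃ x : X.Div, X.inter x x = -2) ↔ d ∣ g := by
  obtain ⟨hFi, hFF⟩ := hF
  -- bilinearity in the left argument
  have hlin : ∀ (D : X.Div) (a b : ℤ),
      X.inter (a • C + b • F) D = a * X.inter C D + b * X.inter F D := by
    intro D a b
    let f : X.Div →+ ℤ := AddMonoidHom.mk' (fun E => X.inter E D)
      (fun E G => X.inter_add_left E G D)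
    have : f (a • C + b • F) = a * f C + b * f F := by
      rw [map_add, map_zsmul, map_zsmul]; simp [smul_eq_mul]
    simpa [f] using this
  have hFC : X.inter F C = d := by rw [X.inter_comm, hCF]
  have hself : ∀ a b : ℤ,
      X.inter (a • C + b • F) (a • C + b • F) = a * a * (2 * g - 2) + 2 * a * b * d := by
    intro a b
    rw [hlin, X.inter_comm C, hlin, X.inter_comm F (a • C + b • F), hlin,
      hCC, hCF, hFC, hFF]
    ring
  constructor
  · rintro ⟨x, hx⟩
    obtain ⟨a, b, hab⟩ := hbasis x
    have h1 : X.inter x x = X.inter (a • C + b • F) (a • C + b • F) := by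
      rw [X.inter_linEq_left x hab, X.inter_comm, X.inter_linEq_left _ hab]
    have heq : a * a * (2 * g - 2) + 2 * a * b * d = -2 := by
      rw [← hself a b, ← h1, hx]
    have heq' : a * (a * (g - 1) + b * d) = -1 := by linarith
    have ha : a = 1 ∨ a = -1 := by
      have : IsUnit a := IsUnit.of_mul_eq_one (a := a) (-(a * (g - 1) + b * d)) (by linarith)
      exact Int.isUnit_iff.mp this
    rcases ha with ha | ha
    · subst ha
      have : b * d = -g := by linarith
      exact ⟨-b, by linarith [this]⟩
    · subst ha
      have : b * d = g := by linarith
      exact ⟨b, by linarith [this]⟩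
  · rintro ⟨k, hk⟩
    refine ⟨(1 : ℤ) • C + (-k) • F, ?_⟩
    rw [hself]
    rw [hk]; ring
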